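/- (Andréief's integration formula.) Let a < b be real numbers and let φ₁,…,φₙ : [a,b] → ℂ be measurable functions with ∫_a^b |φᵢ(x)|² dx < ∞ for each i. Then det( ∫_a^b φᵢ(x) · conj(φ_k(x)) dx )_{i,k=1}^{n} = (1/n!) ∫_a^b dx₁ ⋯ ∫_a^b dxₙ det(φᵢ(x_j))_{i,j=1}^{n} · conj( det(φᵢ(x_j))_{i,j=1}^{n} ). -/

import Mathlib

open MeasureTheory Set

lemma restrict_pi_aux {ι : Type*} [Fintype ι] {E : ι → Type*} [∀ i, MeasurableSpace (E i)]
    (μ : ∀ i, Measure (E i)) [∀ i, SigmaFinite (μ i)] (s : ∀ i, Set (E i))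
    (hs : ∀ i, MeasurableSet (s i)) :
    (Measure.pi μ).restrict (Set.univ.pi s) = Measure.pi (fun i => (μ i).restrict (s i)) := by
  refine (Measure.pi_eq (μ' := (Measure.pi μ).restrict (Set.univ.pi s)) (μ := fun i => (μ i).restrict (s i)) fun t ht => ?_).symm
  rw [Measure.restrict_apply (MeasurableSet.pi countable_univ (fun i _ => ht i)),
    ← Set.pi_inter_distrib, Measure.pi_pi]
  exact Finset.prod_congr rfl fun i _ => (Measure.restrict_apply (ht i)).symm

lemma integral_pi_prod {E : Type*} [MeasurableSpace E] (μ : Measure E) [SigmaFinite μ]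
    {n : ℕ} (f : Fin n → E → ℂ) :
    ∫ x : Fin n → E, ∏ i, f i (x i) ∂(Measure.pi fun _ => μ) = ∏ i, ∫ x, f i x ∂μ := by
  letI : MeasureSpace E := ⟨μ⟩
  exact integral_fintype_prod_eq_prod f (μ := fun _ => μ)

lemma integrable_pi_prod {E : Type*} [MeasurableSpace E] (μ : Measure E) [SigmaFinite μ]
    {n : ℕ} (f : Fin n → E → ℂ) (hf : ∀ i, Integrable (f i) μ) :
    Integrable (fun x : Fin n → E => ∏ i, f i (x i)) (Measure.pi fun _ => μ) := by
  letI : MeasureSpace E := ⟨μ⟩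
  exact Integrable.fintype_prod hf
open MeasureTheory Set Equiv

lemma double_sum_det {n : ℕ} (M : Matrix (Fin n) (Fin n) ℂ) :
    ∑ σ : Perm (Fin n), ∑ τ : Perm (Fin n),
      ((Perm.sign σ : ℤ) : ℂ) * ((Perm.sign τ : ℤ) : ℂ) * ∏ j, M (σ j) (τ j)
      = (n.factorial : ℂ) * M.det := by
  rw [Finset.sum_comm]
  have key : ∀ τ : Perm (Fin n),
      ∑ σ : Perm (Fin n), ((Perm.sign σ : ℤ) : ℂ) * ((Perm.sign τ : ℤ) : ℂ) *
        ∏ j, M (σ j) (τ j) = M.det := by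
    intro τ
    rw [← Equiv.sum_comp (Equiv.mulRight τ)
      (fun σ => ((Perm.sign σ : ℤ) : ℂ) * ((Perm.sign τ : ℤ) : ℂ) * ∏ j, M (σ j) (τ j)),
      Matrix.det_apply']
    refine Finset.sum_congr rfl fun ρ _ => ?_
    have h1 : ((Perm.sign (Equiv.mulRight τ ρ) : ℤ) : ℂ) * ((Perm.sign τ : ℤ) : ℂ)
        = ((Perm.sign ρ : ℤ) : ℂ) := by
      simp only [Equiv.coe_mulRight, map_mul]
      push_cast
      rcases Int.units_eq_one_or (Perm.sign τ) with h | h <;>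
        rcases Int.units_eq_one_or (Perm.sign ρ) with h' | h' <;> simp [h, h'] <;> ring
    have h2 : ∏ j, M ((Equiv.mulRight τ ρ) j) (τ j) = ∏ i, M (ρ i) i := by
      rw [← Equiv.prod_comp τ (fun k => M (ρ k) k)]
      rfl
    rw [h1, h2]
  simp only [key, Finset.sum_const, Finset.card_univ, Fintype.card_perm, nsmul_eq_mul, Fintype.card_fin]

/-- Andréief's integration formula (Theorem 2 of the paper): for square-integrable
measurable functions `φ₁,…,φₙ` on `[a,b]`,
`det(∫_a^b φᵢ conj(φₖ))ᵢₖ = (1/n!) ∫_{[a,b]ⁿ} |det(φᵢ(xⱼ))|² dx₁⋯dxₙ`. -/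
theorem andreief_integration_formula
    (n : ℕ) (a b : ℝ) (hab : a < b) (φ : Fin n → ℝ → ℂ)
    (hmeas : ∀ i, Measurable (φ i))
    (hL2 : ∀ i, IntegrableOn (fun x => ‖φ i x‖ ^ 2) (Set.Icc a b)) :
    Matrix.det (Matrix.of fun i k : Fin n =>
        ∫ x in Set.Icc a b, φ i x * (starRingEnd ℂ) (φ k x)) =
      (n.factorial : ℂ)⁻¹ *
        ∫ x in Set.univ.pi (fun _ : Fin n => Set.Icc a b),
          Matrix.det (Matrix.of fun i j : Fin n => φ i (x j)) *
            (starRingEnd ℂ) (Matrix.det (Matrix.of fun i j : Fin n => φ i (x j))) := by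
  set μ : Measure ℝ := volume.restrict (Set.Icc a b) with hμ
  set g : Fin n → Fin n → ℝ → ℂ := fun i k x => φ i x * (starRingEnd ℂ) (φ k x) with hgdef
  -- integrability of each product
  have hg : ∀ i k, Integrable (g i k) μ := by
    intro i k
    have hm : AEStronglyMeasurable (g i k) μ :=
      ((hmeas i).mul (continuous_star.measurable.comp (hmeas k))).aestronglyMeasurable
    refine (((hL2 i).add (hL2 k)).div_const 2).mono' hm ?_
    · refine Filter.Eventually.of_forall fun x => ?_
      have h2 : 2 * ‖φ i x‖ * ‖φ k x‖ ≤ ‖φ i x‖ ^ 2 + ‖φ k x‖ ^ 2 := two_mul_le_add_sq _ _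
      have : ‖g i k x‖ = ‖φ i x‖ * ‖φ k x‖ := by
        simp [hgdef, norm_mul]
      rw [this]; simp only [Pi.add_apply]; linarith
  set M : Matrix (Fin n) (Fin n) ℂ := Matrix.of fun i k => ∫ x, g i k x ∂μ with hM
  -- rewrite the domain integral as an integral w.r.t. the product of restricted measures
  have hrestrict : (volume : Measure (Fin n → ℝ)).restrict
      (Set.univ.pi (fun _ : Fin n => Set.Icc a b)) = Measure.pi (fun _ : Fin n => μ) := by
    rw [MeasureTheory.volume_pi, restrict_pi_aux _ _ (fun _ => measurableSet_Icc)]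
  have hint : ∫ x in Set.univ.pi (fun _ : Fin n => Set.Icc a b),
      Matrix.det (Matrix.of fun i j : Fin n => φ i (x j)) *
        (starRingEnd ℂ) (Matrix.det (Matrix.of fun i j : Fin n => φ i (x j)))
      = (n.factorial : ℂ) * M.det := by
    rw [hrestrict]
    have expand : ∀ x : Fin n → ℝ,
        Matrix.det (Matrix.of fun i j : Fin n => φ i (x j)) *
          (starRingEnd ℂ) (Matrix.det (Matrix.of fun i j : Fin n => φ i (x j)))
        = ∑ σ : Perm (Fin n), ∑ τ : Perm (Fin n),
            ((Perm.sign σ : ℤ) : ℂ) * ((Perm.sign τ : ℤ) : ℂ) *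
              ∏ j, g (σ j) (τ j) (x j) := by
      intro x
      rw [Matrix.det_apply', map_sum, Finset.sum_mul_sum]
      refine Finset.sum_congr rfl fun σ _ => Finset.sum_congr rfl fun τ _ => ?_
      simp only [map_mul, map_prod, map_intCast, Matrix.of_apply, hgdef]
      rw [Finset.prod_mul_distrib]
      ring
    simp_rw [expand]
    rw [integral_finset_sum]
    · have inner : ∀ σ : Perm (Fin n),
          ∫ x : Fin n → ℝ, (∑ τ : Perm (Fin n),
            ((Perm.sign σ : ℤ) : ℂ) * ((Perm.sign τ : ℤ) : ℂ) *
              ∏ j, g (σ j) (τ j) (x j)) ∂(Measure.pi fun _ => μ)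
          = ∑ τ : Perm (Fin n), ((Perm.sign σ : ℤ) : ℂ) * ((Perm.sign τ : ℤ) : ℂ) *
              ∏ j, (M (σ j) (τ j)) := by
        intro σ
        rw [integral_finset_sum]
        · refine Finset.sum_congr rfl fun τ _ => ?_
          rw [integral_const_mul, integral_pi_prod μ (fun j x => g (σ j) (τ j) x)]
          rfl
        · intro τ _
          exact ((integrable_pi_prod μ _ (fun j => hg (σ j) (τ j))).const_mul _)
      simp_rw [inner]
      exact double_sum_det M
    · intro σ _
      refine integrable_finset_sum _ fun τ _ => ?_
      exact ((integrable_pi_prod μ _ (fun j => hg (σ j) (τ j))).const_mul _)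
  have hne : (n.factorial : ℂ) ≠ 0 := by exact_mod_cast Nat.factorial_ne_zero n
  rw [hint, ← mul_assoc, inv_mul_cancel₀ hne, one_mul]
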